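/- Let (X, 𝓑) be a tree-like ball space. Then ci(ci(𝓑)) = ci(𝓑), i.e., the chain intersection rank of 𝓑 is at most 1. -/
import Mathlib


/-- `ci 𝓑` is the collection of all nonempty intersections of nonempty
inclusion-chains of members of `𝓑`. -/
def ci {X : Type*} (B : Set (Set X)) : Set (Set X) :=
  {I | I.Nonempty ∧ ∃ C ⊆ B, C.Nonempty ∧ IsChain (· ⊆ ·) C ∧ I = ⋂₀ C}

/-- If `(X, 𝓑)` is a tree-like ball space, then `ci (ci 𝓑) = ci 𝓑`,
i.e. the chain intersection rank of `𝓑` is at most `1`. -/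
theorem ci_ci_eq_ci_of_treelike {X : Type*} [Nonempty X] (B : Set (Set X))
    (hBne : B.Nonempty) (hball : ∀ b ∈ B, b.Nonempty)
    (htree : ∀ b₁ ∈ B, ∀ b₂ ∈ B, (b₁ ∩ b₂).Nonempty → b₁ ⊆ b₂ ∨ b₂ ⊆ b₁) :
    ci (ci B) = ci B := by
  ext I
  constructor
  · rintro ⟨hIne, C, hCsub, hCne, hChain, rfl⟩
    refine ⟨hIne, ?_⟩
    choose! ne D hDB hDne hDchain hD using fun c (hc : c ∈ C) => hCsub hc
    have hIsub : ∀ c ∈ C, ∀ b ∈ D c, ⋂₀ C ⊆ b := by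
      intro c hc b hb x hx
      have hxc : x ∈ c := hx c hc
      rw [hD c hc] at hxc
      exact hxc b hb
    refine ⟨⋃ c ∈ C, D c, ?_, ?_, ?_, ?_⟩
    · intro b hb
      simp only [Set.mem_iUnion] at hb
      obtain ⟨c, hc, hbc⟩ := hb
      exact hDB c hc hbc
    · obtain ⟨c, hc⟩ := hCne
      obtain ⟨b, hb⟩ := hDne c hc
      exact ⟨b, Set.mem_biUnion hc hb⟩
    · intro b₁ hb₁ b₂ hb₂ _
      simp only [Set.mem_iUnion] at hb₁ hb₂
      obtain ⟨c₁, hc₁, hb₁'⟩ := hb₁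
      obtain ⟨c₂, hc₂, hb₂'⟩ := hb₂
      obtain ⟨x, hx⟩ := hIne
      exact htree b₁ (hDB c₁ hc₁ hb₁') b₂ (hDB c₂ hc₂ hb₂')
        ⟨x, hIsub c₁ hc₁ b₁ hb₁' hx, hIsub c₂ hc₂ b₂ hb₂' hx⟩
    · ext x
      simp only [Set.mem_sInter, Set.mem_iUnion]
      constructor
      · rintro h b ⟨c, hc, hbc⟩
        exact hIsub c hc b hbc (by intro c' hc'; exact h c' hc')
      · intro h c hc
        rw [hD c hc]
        intro b hb
        exact h b ⟨c, hc, hb⟩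
  · rintro ⟨hIne, hrest⟩
    exact ⟨hIne, {I}, by simp [ci]; exact ⟨hIne, hrest⟩, ⟨I, rfl⟩,
      Set.Subsingleton.isChain (Set.subsingleton_singleton),
      (Set.sInter_singleton I).symm⟩
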